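/- Let F be a finite field with q elements of characteristic p > 2 and E the infinite-dimensional Grassmann algebra. If f(y_1,...,y_n) is a commutative p-polynomial (each variable occurs in each monomial with exponent divisible by p and less than pq) that vanishes under all substitutions y_i ↦ elements of the even part E^0 of E, then f is the zero polynomial. -/

import Mathlib

set_option synthInstance.maxHeartbeats 1000000
set_option maxHeartbeats 1000000

/-- Over a finite field of characteristic `p > 2` with `q` elements, a commutative
`p`-polynomial (exponents divisible by `p` and `< pq`) which vanishes under all
substitutions into the even part `E⁰` of the Grassmann algebra is the zero polynomial. -/
theorem ppoly_identity_is_zero (F : Type*) [Field F] [Fintype F] (p q n : ℕ)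
    (hq : q = Fintype.card F) [CharP F p] (hp : 2 < p)
    (f : MvPolynomial (Fin n) F)
    (hppoly : f ∈ Submodule.span F {m : MvPolynomial (Fin n) F |
      ∃ a : Fin n → ℕ, (∀ i, p ∣ a i ∧ a i < p * q) ∧
        m = ∏ i, MvPolynomial.X i ^ a i})
    (hvanish : ∀ σ : Fin n → ExteriorAlgebra F (ℕ →₀ F),
      (∀ i, σ i ∈ CliffordAlgebra.evenOdd (0 : QuadraticForm F (ℕ →₀ F)) 0) →
      ∑ d ∈ f.support, f.coeff d • (List.ofFn fun i => σ i ^ d i).prod = 0) :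
    f = 0 := by
  classical
  have hprime : p.Prime := CharP.char_is_prime F p
  haveI : Fact p.Prime := ⟨hprime⟩
  have hp0 : 0 < p := hprime.pos
  have hq0 : 0 < q := by rw [hq]; exact Fintype.card_pos
  -- Step 1: all exponents in the support of `f` are divisible by `p` and `< p*q`.
  have hsupp : ∀ d ∈ f.support, ∀ i, p ∣ d i ∧ d i < p * q := by
    have hle : Submodule.span F {m : MvPolynomial (Fin n) F |
        ∃ a : Fin n → ℕ, (∀ i, p ∣ a i ∧ a i < p * q) ∧
          m = ∏ i, MvPolynomial.X i ^ a i} ≤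
        MvPolynomial.restrictSupport F {d : Fin n →₀ ℕ | ∀ i, p ∣ d i ∧ d i < p * q} := by
      rw [Submodule.span_le]
      rintro m ⟨a, ha, rfl⟩
      have hd : (∏ i, (MvPolynomial.X i : MvPolynomial (Fin n) F) ^ a i) =
          MvPolynomial.monomial (Finsupp.equivFunOnFinite.symm a) 1 := by
        rw [← MvPolynomial.prod_X_pow_eq_monomial]
        refine (Finset.prod_subset (Finset.subset_univ _) ?_).symm
        intro i _ hi
        have : a i = 0 := by
          simpa [Finsupp.equivFunOnFinite] using Finsupp.notMem_support_iff.mp hi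
        simp [Finsupp.equivFunOnFinite, this]
      rw [hd, MvPolynomial.restrictSupport, SetLike.mem_coe, AddMonoidAlgebra.mem_supported]
      intro d hd'
      replace hd' : d ∈ (MvPolynomial.monomial (Finsupp.equivFunOnFinite.symm a)
        (1 : F)).support := hd'
      rw [MvPolynomial.support_monomial] at hd'
      simp only [one_ne_zero, if_false, Finset.mem_singleton] at hd'
      subst hd'
      intro i
      simpa [Finsupp.equivFunOnFinite] using ha i
    intro d hd i
    have := hle hppoly
    rw [MvPolynomial.restrictSupport, AddMonoidAlgebra.mem_supported] at this
    exact this hd i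
  -- Step 2: `f` vanishes on all of `F^n`.
  have heval : ∀ c : Fin n → F, MvPolynomial.eval c f = 0 := by
    intro c
    have h1 : (1 : ExteriorAlgebra F (ℕ →₀ F)) ∈
        CliffordAlgebra.evenOdd (0 : QuadraticForm F (ℕ →₀ F)) 0 :=
      Submodule.one_le.mp (CliffordAlgebra.one_le_evenOdd_zero _)
    have hv := hvanish (fun i => algebraMap F (ExteriorAlgebra F (ℕ →₀ F)) (c i))
      (fun i => by
        show algebraMap F (ExteriorAlgebra F (ℕ →₀ F)) (c i) ∈ _
        rw [Algebra.algebraMap_eq_smul_one]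
        exact Submodule.smul_mem _ _ h1)
    beta_reduce at hv
    have hkey : ∑ d ∈ f.support, f.coeff d •
        (List.ofFn fun i => (algebraMap F (ExteriorAlgebra F (ℕ →₀ F)) (c i)) ^ d i).prod =
        algebraMap F (ExteriorAlgebra F (ℕ →₀ F)) (MvPolynomial.eval c f) := by
      rw [MvPolynomial.eval_eq',
        map_sum (algebraMap F (ExteriorAlgebra F (ℕ →₀ F))) _ f.support]
      refine Finset.sum_congr rfl fun d _ => ?_
      have hlist : (List.ofFn fun i => (algebraMap F (ExteriorAlgebra F (ℕ →₀ F)) (c i)) ^ d i)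
          = List.map (algebraMap F (ExteriorAlgebra F (ℕ →₀ F)))
            (List.ofFn fun i => c i ^ d i) := by
        rw [List.map_ofFn]
        exact congrArg _ (funext fun i => (map_pow _ _ _).symm)
      rw [hlist, ← map_list_prod (algebraMap F (ExteriorAlgebra F (ℕ →₀ F))),
        List.prod_ofFn, map_mul (algebraMap F (ExteriorAlgebra F (ℕ →₀ F))),
        ← Algebra.smul_def]
    rw [hkey] at hv
    have := ExteriorAlgebra.algebraMap_leftInverse (R := F) (ℕ →₀ F)
    apply this.injective
    rw [hv, map_zero]
  -- Step 3: the Frobenius trick.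
  set φ := frobeniusEquiv F p with hφ
  set div : (Fin n →₀ ℕ) → (Fin n →₀ ℕ) :=
    fun d => Finsupp.mapRange (· / p) (Nat.zero_div p) d with hdiv
  have hdiv_apply : ∀ d i, div d i = d i / p := fun d i => rfl
  set g : MvPolynomial (Fin n) F :=
    ∑ d ∈ f.support, MvPolynomial.monomial (div d) (φ.symm (f.coeff d)) with hg
  have hmul : ∀ d ∈ f.support, ∀ i, p * (div d i) = d i := by
    intro d hd i
    exact Nat.mul_div_cancel' (hsupp d hd i).1
  -- `g` evaluates to zero everywhere.
  have hgeval : ∀ c : Fin n → F, MvPolynomial.eval c g = 0 := by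
    intro c
    apply φ.injective
    rw [map_zero]
    have : φ (MvPolynomial.eval c g) = MvPolynomial.eval c f := by
      rw [hg, map_sum, map_sum, MvPolynomial.eval_eq']
      refine Finset.sum_congr rfl fun d hd => ?_
      rw [MvPolynomial.eval_monomial, map_mul, RingEquiv.apply_symm_apply,
        Finsupp.prod_fintype _ _ (fun i => pow_zero _), map_prod]
      congr 1
      refine Finset.prod_congr rfl fun i _ => ?_
      rw [frobeniusEquiv_def, ← pow_mul, mul_comm, hmul d hd i]
    rw [this, heval]
  -- `g` has all degrees `< q = |F|`, hence `g = 0`.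
  have hgdeg : ∀ s ∈ g.support, ∀ i, s i ≤ q - 1 := by
    have hmem : g ∈ MvPolynomial.restrictDegree (Fin n) F (q - 1) := by
      rw [hg]
      refine Submodule.sum_mem _ fun d hd => ?_
      rw [MvPolynomial.mem_restrictDegree]
      intro s hs i
      rw [MvPolynomial.support_monomial] at hs
      by_cases h0 : φ.symm (f.coeff d) = 0
      · simp [h0] at hs
      · simp only [h0, if_false, Finset.mem_singleton] at hs
        subst hs
        rw [hdiv_apply]
        have : d i / p < q := (Nat.div_lt_iff_lt_mul hp0).mpr
          (by rw [mul_comm]; exact (hsupp d hd i).2)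
        omega
    rw [MvPolynomial.mem_restrictDegree] at hmem
    exact hmem
  have hgzero : g = 0 := by
    have hinj := MvPolynomial.rename_injective (R := F)
      (Equiv.ulift (α := Fin n)).symm (Equiv.ulift (α := Fin n)).symm.injective
    apply hinj
    rw [map_zero]
    refine MvPolynomial.eq_zero_of_eval_eq_zero _ F _ (fun v => ?_) ?_
    · rw [MvPolynomial.eval_rename]
      exact hgeval _
    · rw [MvPolynomial.mem_restrictDegree]
      intro s hs i
      rw [MvPolynomial.support_rename_of_injective
        (Equiv.ulift (α := Fin n)).symm.injective, Finset.mem_image] at hs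
      obtain ⟨d, hd, rfl⟩ := hs
      have : (Finsupp.mapDomain (Equiv.ulift (α := Fin n)).symm d) i
          = d (Equiv.ulift i) := by
        conv_lhs => rw [show i = (Equiv.ulift (α := Fin n)).symm (Equiv.ulift i) from rfl]
        exact Finsupp.mapDomain_apply (Equiv.ulift (α := Fin n)).symm.injective d _
      rw [this, ← hq]
      exact hq ▸ hgdeg d hd (Equiv.ulift i)
  -- Conclude `f = 0`.
  rw [← MvPolynomial.support_eq_empty]
  by_contra hne
  obtain ⟨d, hd⟩ := Finset.nonempty_iff_ne_empty.mpr hne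
  have hcoeff : MvPolynomial.coeff (div d) g = φ.symm (f.coeff d) := by
    rw [hg, MvPolynomial.coeff_sum]
    rw [Finset.sum_eq_single d]
    · rw [MvPolynomial.coeff_monomial, if_pos rfl]
    · intro d' hd' hne'
      rw [MvPolynomial.coeff_monomial, if_neg]
      intro heq
      apply hne'
      ext i
      have h1 := hmul d' hd' i
      have h2 := hmul d hd i
      rw [← h1, ← h2]
      have : div d' i = div d i := by rw [heq]
      rw [this]
    · intro h; exact absurd hd h
  rw [hgzero] at hcoeff
  simp only [MvPolynomial.coeff_zero] at hcoeff
  have := MvPolynomial.mem_support_iff.mp hd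
  exact this (by rw [← RingEquiv.apply_symm_apply φ (f.coeff d), ← hcoeff, map_zero])
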